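/- Let ε ∈ {−1,1} and take the defining function H(x₂,x₃,x₄) = ε·x₃^{−2} (the homogeneous Siklos metric with k = −1, the Defrise spacetime). The immersion F(u₁,u₂,u₃) = (u₁, −u₃/β, u₃, −u₂u₃/β), defined on V = {u ∈ ℝ³ : u₃ > 0} with unit normal ξ(u) = (u₃, 0, u₃/β, 0), is a parallel hypersurface of the Siklos metric (∇h ≡ 0) which is not totally geodesic (h ≢ 0). -/

import Mathlib

open scoped BigOperators

/-- Partial derivative of `f : ℝⁿ → ℝ` in the `i`-th coordinate direction. -/
noncomputable def pd {n : ℕ} (i : Fin n) (f : (Fin n → ℝ) → ℝ) (x : Fin n → ℝ) : ℝ :=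
  deriv (fun t => f (Function.update x i t)) (x i)

/-- Christoffel symbols `Γᵏᵢⱼ` of a metric field `g`. -/
noncomputable def christoffel {n : ℕ} (g : (Fin n → ℝ) → Matrix (Fin n) (Fin n) ℝ)
    (x : Fin n → ℝ) (k i j : Fin n) : ℝ :=
  (1 / 2) * ∑ l, (g x)⁻¹ k l *
    (pd i (fun y => g y l j) x + pd j (fun y => g y l i) x - pd l (fun y => g y i j) x)

/-- `curv g x i j k l` is the `l`-th component of `R(∂ᵢ,∂ⱼ)∂ₖ` at `x`
(convention `R(X,Y) = [∇_X,∇_Y] − ∇_{[X,Y]}`). -/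
noncomputable def curv {n : ℕ} (g : (Fin n → ℝ) → Matrix (Fin n) (Fin n) ℝ)
    (x : Fin n → ℝ) (i j k l : Fin n) : ℝ :=
  pd i (fun y => christoffel g y l j k) x - pd j (fun y => christoffel g y l i k) x
    + ∑ m, (christoffel g x l i m * christoffel g x m j k
        - christoffel g x l j m * christoffel g x m i k)

/-- The Siklos metric with parameter `β` and defining function `H = H(x₂,x₃,x₄)`;
indices `0,1,2,3` correspond to the coordinates `x₁,x₂,x₃,x₄`. -/
noncomputable def siklos (β : ℝ) (H : ℝ → ℝ → ℝ → ℝ) (x : Fin 4 → ℝ) :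
    Matrix (Fin 4) (Fin 4) ℝ :=
  Matrix.of fun i j =>
    if (i = 0 ∧ j = 1) ∨ (i = 1 ∧ j = 0) ∨ (i = 2 ∧ j = 2) ∨ (i = 3 ∧ j = 3) then
      β ^ 2 / x 2 ^ 2
    else if i = 1 ∧ j = 1 then β ^ 2 / x 2 ^ 2 * H (x 1) (x 2) (x 3)
    else 0

/-- `H'₂`. -/
noncomputable def H2 (H : ℝ → ℝ → ℝ → ℝ) (a b c : ℝ) : ℝ := deriv (fun t => H t b c) a
/-- `H'₃`. -/
noncomputable def H3 (H : ℝ → ℝ → ℝ → ℝ) (a b c : ℝ) : ℝ := deriv (fun t => H a t c) b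
/-- `H'₄`. -/
noncomputable def H4 (H : ℝ → ℝ → ℝ → ℝ) (a b c : ℝ) : ℝ := deriv (fun t => H a b t) c
/-- `H''₂₃`. -/
noncomputable def H23 (H : ℝ → ℝ → ℝ → ℝ) (a b c : ℝ) : ℝ := deriv (fun t => H3 H t b c) a
/-- `H''₃₃`. -/
noncomputable def H33 (H : ℝ → ℝ → ℝ → ℝ) (a b c : ℝ) : ℝ := deriv (fun t => H3 H a t c) b
/-- `H''₃₄`. -/
noncomputable def H34 (H : ℝ → ℝ → ℝ → ℝ) (a b c : ℝ) : ℝ := deriv (fun t => H4 H a t c) b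
/-- `H''₄₄`. -/
noncomputable def H44 (H : ℝ → ℝ → ℝ → ℝ) (a b c : ℝ) : ℝ := deriv (fun t => H4 H a b t) c

/-- Ricci tensor `Ricⱼₖ = Σᵢ (R(∂ᵢ,∂ⱼ)∂ₖ)ⁱ` of the Siklos metric. -/
noncomputable def ricci (β : ℝ) (H : ℝ → ℝ → ℝ → ℝ) (x : Fin 4 → ℝ) (j k : Fin 4) : ℝ :=
  ∑ i, curv (siklos β H) x i j k i

/-- Scalar curvature of the Siklos metric. -/
noncomputable def scal (β : ℝ) (H : ℝ → ℝ → ℝ → ℝ) (x : Fin 4 → ℝ) : ℝ :=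
  ∑ j, ∑ k, (siklos β H x)⁻¹ j k * ricci β H x j k

/-- `g(X,Y) = Σᵢⱼ gᵢⱼ Xⁱ Yʲ`. -/
noncomputable def gApply (M : Matrix (Fin 4) (Fin 4) ℝ) (X Y : Fin 4 → ℝ) : ℝ :=
  ∑ i, ∑ j, M i j * X i * Y j

/-- Curvature applied to arbitrary vectors: `R(X,Y)Z = Σᵢⱼₖ XⁱYʲZᵏ R(∂ᵢ,∂ⱼ)∂ₖ`. -/
noncomputable def Rmulti (β : ℝ) (H : ℝ → ℝ → ℝ → ℝ) (x : Fin 4 → ℝ)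
    (X Y Z : Fin 4 → ℝ) (l : Fin 4) : ℝ :=
  ∑ i, ∑ j, ∑ k, X i * Y j * Z k * curv (siklos β H) x i j k l

/-- `Rₐᵦ𝒸𝒹 = g(R(∂ₐ,∂ᵦ)∂𝒹, ∂𝒸)`. -/
noncomputable def Rlow (β : ℝ) (H : ℝ → ℝ → ℝ → ℝ) (x : Fin 4 → ℝ) (a b c d : Fin 4) : ℝ :=
  ∑ l, siklos β H x l c * curv (siklos β H) x a b d l

/-- The Weyl tensor (in dimension 4) of the Siklos metric. -/
noncomputable def weyl (β : ℝ) (H : ℝ → ℝ → ℝ → ℝ) (x : Fin 4 → ℝ) (a b c d : Fin 4) : ℝ :=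
  Rlow β H x a b c d
    - (1 / 2) * (siklos β H x a c * ricci β H x b d - siklos β H x a d * ricci β H x b c
        + siklos β H x b d * ricci β H x a c - siklos β H x b c * ricci β H x a d)
    + scal β H x / 6 *
        (siklos β H x a c * siklos β H x b d - siklos β H x a d * siklos β H x b c)

/-- Coordinate tangent vector `F_{uᵢ}` of an immersion `F : ℝ³ → ℝ⁴`. -/
noncomputable def Fu (F : (Fin 3 → ℝ) → Fin 4 → ℝ) (i : Fin 3) (u : Fin 3 → ℝ) :
    Fin 4 → ℝ := fun k => pd i (fun v => F v k) u

/-- Ambient covariant derivative `DᵢF_{uⱼ}` along `F`, for the Siklos metric. -/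
noncomputable def ambD (β : ℝ) (H : ℝ → ℝ → ℝ → ℝ) (F : (Fin 3 → ℝ) → Fin 4 → ℝ)
    (i j : Fin 3) (u : Fin 3 → ℝ) : Fin 4 → ℝ :=
  fun k => pd i (fun v => Fu F j v k) u
    + ∑ l, ∑ m, christoffel (siklos β H) (F u) k l m * Fu F i u l * Fu F j u m

/-- Second fundamental form `hᵢⱼ = g(DᵢF_{uⱼ}, ξ)` of `F` with unit normal `ξ`. -/
noncomputable def sff (β : ℝ) (H : ℝ → ℝ → ℝ → ℝ) (F ξ : (Fin 3 → ℝ) → Fin 4 → ℝ)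
    (i j : Fin 3) (u : Fin 3 → ℝ) : ℝ :=
  gApply (siklos β H (F u)) (ambD β H F i j u) (ξ u)

/-- Induced metric `ĝᵢⱼ = g(F_{uᵢ}, F_{uⱼ})` of the hypersurface. -/
noncomputable def inducedMetric (β : ℝ) (H : ℝ → ℝ → ℝ → ℝ) (F : (Fin 3 → ℝ) → Fin 4 → ℝ)
    (u : Fin 3 → ℝ) : Matrix (Fin 3) (Fin 3) ℝ :=
  Matrix.of fun i j => gApply (siklos β H (F u)) (Fu F i u) (Fu F j u)

/-- Covariant derivative of the second fundamental form,
`(∇h)ₖᵢⱼ = ∂ₖhᵢⱼ − Σₗ Γ̂ˡₖᵢ hₗⱼ − Σₗ Γ̂ˡₖⱼ hᵢₗ`. -/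
noncomputable def nablah (β : ℝ) (H : ℝ → ℝ → ℝ → ℝ) (F ξ : (Fin 3 → ℝ) → Fin 4 → ℝ)
    (k i j : Fin 3) (u : Fin 3 → ℝ) : ℝ :=
  pd k (fun v => sff β H F ξ i j v) u
    - ∑ l, christoffel (inducedMetric β H F) u l k i * sff β H F ξ l j u
    - ∑ l, christoffel (inducedMetric β H F) u l k j * sff β H F ξ i l u

/-- Mean curvature `(1/3) Σᵢⱼ ĝⁱʲ hᵢⱼ` of the hypersurface. -/
noncomputable def meanCurv (β : ℝ) (H : ℝ → ℝ → ℝ → ℝ) (F ξ : (Fin 3 → ℝ) → Fin 4 → ℝ)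
    (u : Fin 3 → ℝ) : ℝ :=
  (1 / 3) * ∑ i, ∑ j, (inducedMetric β H F u)⁻¹ i j * sff β H F ξ i j u

-- ===== auxiliary development =====

lemma deriv_const_div_pow (c a : ℝ) (n : ℕ) (ha : a ≠ 0) :
    deriv (fun t : ℝ => c / t ^ n) a = -(n * c) / a ^ (n + 1) := by
  have h : HasDerivAt (fun t : ℝ => c / t ^ n)
      (c * (-(n * a ^ (n - 1)) / (a ^ n) ^ 2)) a := by
    simp only [div_eq_mul_inv]
    exact ((hasDerivAt_pow n a).inv (pow_ne_zero n ha)).const_mul c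
  rw [h.deriv]
  rcases n with _ | m
  · simp
  · have : a ^ m ≠ 0 := pow_ne_zero m ha
    simp only [Nat.add_sub_cancel]
    field_simp
    ring

noncomputable def SK (β ε s : ℝ) : Matrix (Fin 4) (Fin 4) ℝ :=
  !![0, β^2/s^2, 0, 0; β^2/s^2, β^2*ε/s^4, 0, 0; 0, 0, β^2/s^2, 0; 0, 0, 0, β^2/s^2]

lemma siklos_eq (β ε : ℝ) : siklos β (fun _ b _ => ε / b ^ 2) = fun x => SK β ε (x 2) := by
  funext x
  ext i j
  fin_cases i <;> fin_cases j <;> simp [siklos, SK, Matrix.vecHead, Matrix.vecTail] <;> ring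

noncomputable def SKI (β ε s : ℝ) : Matrix (Fin 4) (Fin 4) ℝ :=
  !![-ε/β^2, s^2/β^2, 0, 0; s^2/β^2, 0, 0, 0; 0, 0, s^2/β^2, 0; 0, 0, 0, s^2/β^2]

lemma SK_inv {β s : ℝ} (ε : ℝ) (hβ : β ≠ 0) (hs : s ≠ 0) : (SK β ε s)⁻¹ = SKI β ε s := by
  apply Matrix.inv_eq_right_inv
  ext i j
  fin_cases i <;> fin_cases j <;>
    (simp [SK, SKI, Matrix.mul_apply, Fin.sum_univ_four, Matrix.vecHead, Matrix.vecTail]; try field_simp; try ring)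

noncomputable def SKD (β ε s : ℝ) : Matrix (Fin 4) (Fin 4) ℝ :=
  !![0, -2*β^2/s^3, 0, 0; -2*β^2/s^3, -4*β^2*ε/s^5, 0, 0; 0, 0, -2*β^2/s^3, 0; 0, 0, 0, -2*β^2/s^3]

lemma pd_sik (β ε : ℝ) (x : Fin 4 → ℝ) (hx : x 2 ≠ 0) (i l j : Fin 4) :
    pd i (fun y => SK β ε (y 2) l j) x = if i = 2 then SKD β ε (x 2) l j else 0 := by
  by_cases hi : i = 2
  · subst hi
    simp only [pd, Function.update_self, if_pos rfl]
    fin_cases l <;> fin_cases j <;>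
      simp [SK, SKD, deriv_const_div_pow _ _ _ hx, Matrix.vecHead, Matrix.vecTail] <;> ring
  · rw [if_neg hi]
    simp [pd, Function.update_of_ne (Ne.symm hi)]

noncomputable def GAM (ε s : ℝ) : Fin 4 → Fin 4 → Fin 4 → ℝ :=
  ![![![0,0,-1/s,0], ![0,0,-ε/s^3,0], ![-1/s,-ε/s^3,0,0], ![0,0,0,0]],
    ![![0,0,0,0], ![0,0,-1/s,0], ![0,-1/s,0,0], ![0,0,0,0]],
    ![![0,1/s,0,0], ![1/s,2*ε/s^3,0,0], ![0,0,-1/s,0], ![0,0,0,1/s]],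
    ![![0,0,0,0], ![0,0,0,0], ![0,0,0,-1/s], ![0,0,-1/s,0]]]

set_option maxHeartbeats 2000000 in
lemma christoffel_sik {β : ℝ} (ε : ℝ) (hβ : β ≠ 0) (x : Fin 4 → ℝ) (hx : x 2 ≠ 0)
    (k i j : Fin 4) :
    christoffel (siklos β (fun _ b _ => ε / b ^ 2)) x k i j = GAM ε (x 2) k i j := by
  rw [siklos_eq]
  unfold christoffel
  rw [SK_inv ε hβ hx]
  simp only [pd_sik β ε x hx, Fin.sum_univ_four]
  fin_cases k <;> fin_cases i <;> fin_cases j <;>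
    · simp [SKI, SKD, GAM, Matrix.vecHead, Matrix.vecTail]
      try field_simp
      try ring

noncomputable def FF (β : ℝ) : (Fin 3 → ℝ) → Fin 4 → ℝ :=
  fun u => ![u 0, -u 2 / β, u 2, -u 1 * u 2 / β]


lemma deriv_cmul (c x : ℝ) : deriv (fun t : ℝ => c * t) x = c := by
  simp [deriv_const_mul_field (v := fun t : ℝ => t) c]

lemma Fu0 (β : ℝ) : Fu (FF β) 0 = fun _ => ![1,0,0,0] := by
  funext u k
  fin_cases k <;>
    simp [Fu, FF, pd, Function.update_self, Function.update_of_ne, Matrix.vecHead,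
      Matrix.vecTail, deriv_div_const, deriv_mul_const_field, deriv_const_mul_field, deriv_id'', deriv_cmul]

lemma Fu1 (β : ℝ) : Fu (FF β) 1 = fun u => ![0,0,0,-(u 2)/β] := by
  funext u k
  fin_cases k <;>
    simp [Fu, FF, pd, Function.update_self, Function.update_of_ne, Matrix.vecHead,
      Matrix.vecTail, deriv_div_const, deriv_mul_const_field, deriv_const_mul_field, deriv_id'', deriv_cmul]

lemma Fu2 (β : ℝ) : Fu (FF β) 2 = fun u => ![0,-1/β,1,-(u 1)/β] := by
  funext u k
  fin_cases k <;>
    simp [Fu, FF, pd, Function.update_self, Function.update_of_ne, Matrix.vecHead,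
      Matrix.vecTail, deriv_div_const, deriv_mul_const_field, deriv_const_mul_field, deriv_id'', deriv_cmul]

noncomputable def XI (β : ℝ) : (Fin 3 → ℝ) → Fin 4 → ℝ := fun u => ![u 2, 0, u 2 / β, 0]
noncomputable def HFORM (β ε : ℝ) (u : Fin 3 → ℝ) : Fin 3 → Fin 3 → ℝ :=
  ![![0, 0, -1/(u 2)^2],
    ![0, 1/β, u 1/β/(u 2)],
    ![-1/(u 2)^2, u 1/β/(u 2), ((u 1)^2/β + β)/(u 2)^2 + (2*ε/β)/(u 2)^4]]

set_option maxHeartbeats 1000000 in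
lemma sff00 {β : ℝ} (ε : ℝ) (hβ : β ≠ 0) (u : Fin 3 → ℝ) (hu : u 2 ≠ 0) :
    sff β (fun _ b _ => ε / b ^ 2) (FF β) (XI β) 0 0 u = HFORM β ε u 0 0 := by
  have hx' : (FF β u) 2 ≠ 0 := by simpa [FF] using hu
  have hFF2 : (FF β u) 2 = u 2 := by simp [FF]
  simp only [sff, gApply, ambD]
  simp only [christoffel_sik ε hβ (FF β u) hx', hFF2]
  simp only [Fu0, Fu1, Fu2, siklos_eq, hFF2]
  simp [Fin.sum_univ_four, GAM, SK, FF, XI, HFORM, pd, Function.update_self,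
    Function.update_of_ne, Matrix.vecHead, Matrix.vecTail, deriv_div_const,
    deriv_mul_const_field, deriv_const_mul_field, deriv_id'', deriv_cmul]
  try field_simp
  try ring
  try tauto

set_option maxHeartbeats 1000000 in
lemma sff01 {β : ℝ} (ε : ℝ) (hβ : β ≠ 0) (u : Fin 3 → ℝ) (hu : u 2 ≠ 0) :
    sff β (fun _ b _ => ε / b ^ 2) (FF β) (XI β) 0 1 u = HFORM β ε u 0 1 := by
  have hx' : (FF β u) 2 ≠ 0 := by simpa [FF] using hu
  have hFF2 : (FF β u) 2 = u 2 := by simp [FF]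
  simp only [sff, gApply, ambD]
  simp only [christoffel_sik ε hβ (FF β u) hx', hFF2]
  simp only [Fu0, Fu1, Fu2, siklos_eq, hFF2]
  simp [Fin.sum_univ_four, GAM, SK, FF, XI, HFORM, pd, Function.update_self,
    Function.update_of_ne, Matrix.vecHead, Matrix.vecTail, deriv_div_const,
    deriv_mul_const_field, deriv_const_mul_field, deriv_id'', deriv_cmul]
  try field_simp
  try ring
  try tauto

set_option maxHeartbeats 1000000 in
lemma sff02 {β : ℝ} (ε : ℝ) (hβ : β ≠ 0) (u : Fin 3 → ℝ) (hu : u 2 ≠ 0) :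
    sff β (fun _ b _ => ε / b ^ 2) (FF β) (XI β) 0 2 u = HFORM β ε u 0 2 := by
  have hx' : (FF β u) 2 ≠ 0 := by simpa [FF] using hu
  have hFF2 : (FF β u) 2 = u 2 := by simp [FF]
  simp only [sff, gApply, ambD]
  simp only [christoffel_sik ε hβ (FF β u) hx', hFF2]
  simp only [Fu0, Fu1, Fu2, siklos_eq, hFF2]
  simp [Fin.sum_univ_four, GAM, SK, FF, XI, HFORM, pd, Function.update_self,
    Function.update_of_ne, Matrix.vecHead, Matrix.vecTail, deriv_div_const,
    deriv_mul_const_field, deriv_const_mul_field, deriv_id'', deriv_cmul]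
  try field_simp
  try ring
  try tauto

set_option maxHeartbeats 1000000 in
lemma sff10 {β : ℝ} (ε : ℝ) (hβ : β ≠ 0) (u : Fin 3 → ℝ) (hu : u 2 ≠ 0) :
    sff β (fun _ b _ => ε / b ^ 2) (FF β) (XI β) 1 0 u = HFORM β ε u 1 0 := by
  have hx' : (FF β u) 2 ≠ 0 := by simpa [FF] using hu
  have hFF2 : (FF β u) 2 = u 2 := by simp [FF]
  simp only [sff, gApply, ambD]
  simp only [christoffel_sik ε hβ (FF β u) hx', hFF2]
  simp only [Fu0, Fu1, Fu2, siklos_eq, hFF2]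
  simp [Fin.sum_univ_four, GAM, SK, FF, XI, HFORM, pd, Function.update_self,
    Function.update_of_ne, Matrix.vecHead, Matrix.vecTail, deriv_div_const,
    deriv_mul_const_field, deriv_const_mul_field, deriv_id'', deriv_cmul]
  try field_simp
  try ring
  try tauto

set_option maxHeartbeats 1000000 in
lemma sff11 {β : ℝ} (ε : ℝ) (hβ : β ≠ 0) (u : Fin 3 → ℝ) (hu : u 2 ≠ 0) :
    sff β (fun _ b _ => ε / b ^ 2) (FF β) (XI β) 1 1 u = HFORM β ε u 1 1 := by
  have hx' : (FF β u) 2 ≠ 0 := by simpa [FF] using hu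
  have hFF2 : (FF β u) 2 = u 2 := by simp [FF]
  simp only [sff, gApply, ambD]
  simp only [christoffel_sik ε hβ (FF β u) hx', hFF2]
  simp only [Fu0, Fu1, Fu2, siklos_eq, hFF2]
  simp [Fin.sum_univ_four, GAM, SK, FF, XI, HFORM, pd, Function.update_self,
    Function.update_of_ne, Matrix.vecHead, Matrix.vecTail, deriv_div_const,
    deriv_mul_const_field, deriv_const_mul_field, deriv_id'', deriv_cmul]
  try field_simp
  try ring
  try tauto

set_option maxHeartbeats 1000000 in
lemma sff12 {β : ℝ} (ε : ℝ) (hβ : β ≠ 0) (u : Fin 3 → ℝ) (hu : u 2 ≠ 0) :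
    sff β (fun _ b _ => ε / b ^ 2) (FF β) (XI β) 1 2 u = HFORM β ε u 1 2 := by
  have hx' : (FF β u) 2 ≠ 0 := by simpa [FF] using hu
  have hFF2 : (FF β u) 2 = u 2 := by simp [FF]
  simp only [sff, gApply, ambD]
  simp only [christoffel_sik ε hβ (FF β u) hx', hFF2]
  simp only [Fu0, Fu1, Fu2, siklos_eq, hFF2]
  simp [Fin.sum_univ_four, GAM, SK, FF, XI, HFORM, pd, Function.update_self,
    Function.update_of_ne, Matrix.vecHead, Matrix.vecTail, deriv_div_const,
    deriv_mul_const_field, deriv_const_mul_field, deriv_id'', deriv_cmul]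
  try field_simp
  try ring
  try tauto

set_option maxHeartbeats 1000000 in
lemma sff20 {β : ℝ} (ε : ℝ) (hβ : β ≠ 0) (u : Fin 3 → ℝ) (hu : u 2 ≠ 0) :
    sff β (fun _ b _ => ε / b ^ 2) (FF β) (XI β) 2 0 u = HFORM β ε u 2 0 := by
  have hx' : (FF β u) 2 ≠ 0 := by simpa [FF] using hu
  have hFF2 : (FF β u) 2 = u 2 := by simp [FF]
  simp only [sff, gApply, ambD]
  simp only [christoffel_sik ε hβ (FF β u) hx', hFF2]
  simp only [Fu0, Fu1, Fu2, siklos_eq, hFF2]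
  simp [Fin.sum_univ_four, GAM, SK, FF, XI, HFORM, pd, Function.update_self,
    Function.update_of_ne, Matrix.vecHead, Matrix.vecTail, deriv_div_const,
    deriv_mul_const_field, deriv_const_mul_field, deriv_id'', deriv_cmul]
  try field_simp
  try ring
  try tauto

set_option maxHeartbeats 1000000 in
lemma sff21 {β : ℝ} (ε : ℝ) (hβ : β ≠ 0) (u : Fin 3 → ℝ) (hu : u 2 ≠ 0) :
    sff β (fun _ b _ => ε / b ^ 2) (FF β) (XI β) 2 1 u = HFORM β ε u 2 1 := by
  have hx' : (FF β u) 2 ≠ 0 := by simpa [FF] using hu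
  have hFF2 : (FF β u) 2 = u 2 := by simp [FF]
  simp only [sff, gApply, ambD]
  simp only [christoffel_sik ε hβ (FF β u) hx', hFF2]
  simp only [Fu0, Fu1, Fu2, siklos_eq, hFF2]
  simp [Fin.sum_univ_four, GAM, SK, FF, XI, HFORM, pd, Function.update_self,
    Function.update_of_ne, Matrix.vecHead, Matrix.vecTail, deriv_div_const,
    deriv_mul_const_field, deriv_const_mul_field, deriv_id'', deriv_cmul]
  try field_simp
  try ring
  try tauto

set_option maxHeartbeats 1000000 in
lemma sff22 {β : ℝ} (ε : ℝ) (hβ : β ≠ 0) (u : Fin 3 → ℝ) (hu : u 2 ≠ 0) :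
    sff β (fun _ b _ => ε / b ^ 2) (FF β) (XI β) 2 2 u = HFORM β ε u 2 2 := by
  have hx' : (FF β u) 2 ≠ 0 := by simpa [FF] using hu
  have hFF2 : (FF β u) 2 = u 2 := by simp [FF]
  simp only [sff, gApply, ambD]
  simp only [christoffel_sik ε hβ (FF β u) hx', hFF2]
  simp only [Fu0, Fu1, Fu2, siklos_eq, hFF2]
  simp [Fin.sum_univ_four, GAM, SK, FF, XI, HFORM, pd, Function.update_self,
    Function.update_of_ne, Matrix.vecHead, Matrix.vecTail, deriv_div_const,
    deriv_mul_const_field, deriv_const_mul_field, deriv_id'', deriv_cmul]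
  try field_simp
  try ring
  try tauto

lemma sff_eq {β : ℝ} (ε : ℝ) (hβ : β ≠ 0) (u : Fin 3 → ℝ) (hu : u 2 ≠ 0) (i j : Fin 3) :
    sff β (fun _ b _ => ε / b ^ 2) (FF β) (XI β) i j u = HFORM β ε u i j := by
  fin_cases i <;> fin_cases j
  exacts [sff00 ε hβ u hu, sff01 ε hβ u hu, sff02 ε hβ u hu,
    sff10 ε hβ u hu, sff11 ε hβ u hu, sff12 ε hβ u hu,
    sff20 ε hβ u hu, sff21 ε hβ u hu, sff22 ε hβ u hu]

lemma hasDerivAt_cdp (c a : ℝ) (n : ℕ) (ha : a ≠ 0) :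
    HasDerivAt (fun t : ℝ => c / t ^ n) (-(n * c) / a ^ (n + 1)) a := by
  have h : HasDerivAt (fun t : ℝ => c / t ^ n) (c * (-(n * a ^ (n - 1)) / (a ^ n) ^ 2)) a := by
    simp only [div_eq_mul_inv]
    exact ((hasDerivAt_pow n a).inv (pow_ne_zero n ha)).const_mul c
  convert h using 1
  rcases n with _ | m
  · simp
  · have : a ^ m ≠ 0 := pow_ne_zero m ha
    simp only [Nat.add_sub_cancel]
    field_simp
    ring

lemma pd_congr_pos {f g : (Fin 3 → ℝ) → ℝ} (u : Fin 3 → ℝ) (hu : 0 < u 2)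
    (h : ∀ v : Fin 3 → ℝ, 0 < v 2 → f v = g v) (k : Fin 3) : pd k f u = pd k g u := by
  by_cases hk : k = 2
  · subst hk
    unfold pd
    apply Filter.EventuallyEq.deriv_eq
    filter_upwards [eventually_gt_nhds hu] with t ht
    exact h _ (by simpa using ht)
  · unfold pd
    have h2 : (2 : Fin 3) ≠ k := fun hh => hk hh.symm
    rw [show (fun t => f (Function.update u k t)) = (fun t => g (Function.update u k t)) from
      funext fun t => h _ (by rw [Function.update_of_ne h2]; exact hu)]

lemma deriv_cd1 (c a : ℝ) (ha : a ≠ 0) : deriv (fun t : ℝ => c / t) a = -c / a ^ 2 := by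
  have h := hasDerivAt_cdp c a 1 ha
  simp only [pow_one, Nat.cast_one, one_mul] at h
  simpa using h.deriv

noncomputable def DH (β ε : ℝ) (u : Fin 3 → ℝ) : Fin 3 → Fin 3 → Fin 3 → ℝ :=
  ![![![0,0,0],![0,0,0],![0,0,0]],
    ![![0,0,0],![0,0,1/β/(u 2)],![0,1/β/(u 2),(2*(u 1)/β)/(u 2)^2]],
    ![![0,0,2/(u 2)^3],![0,0,-(u 1/β)/(u 2)^2],
      ![2/(u 2)^3,-(u 1/β)/(u 2)^2, -(2*((u 1)^2/β+β))/(u 2)^3 - (8*ε/β)/(u 2)^5]]]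

set_option maxHeartbeats 1000000 in
lemma pd_hform (β ε : ℝ) (u : Fin 3 → ℝ) (hu : u 2 ≠ 0) (k i j : Fin 3) :
    pd k (fun v => HFORM β ε v i j) u = DH β ε u k i j := by
  fin_cases k <;> fin_cases i <;> fin_cases j <;>
  · simp [pd, HFORM, DH, Function.update_self, Function.update_of_ne, Matrix.vecHead,
      Matrix.vecTail, deriv_div_const, deriv_id'', deriv_cmul]
    all_goals first
      | (rw [(hasDerivAt_cdp (-1) (u 2) 2 hu).deriv]; try norm_num)
      | (rw [deriv_cd1 (u 1 / β) (u 2) hu]; try ring)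
      | (erw [((hasDerivAt_cdp ((u 1)^2/β + β) (u 2) 2 hu).add
            (hasDerivAt_cdp (2*ε/β) (u 2) 4 hu)).deriv]; try norm_num; try ring)

noncomputable def GH (β ε : ℝ) (u : Fin 3 → ℝ) : Matrix (Fin 3) (Fin 3) ℝ :=
  Matrix.of ![![0, 0, -β/(u 2)^2],
    ![0, 1, u 1/(u 2)],
    ![-β/(u 2)^2, u 1/(u 2), ε/(u 2)^4 + ((u 1)^2 + β^2)/(u 2)^2]]

set_option maxHeartbeats 1000000 in
lemma indE00 {β : ℝ} (ε : ℝ) (hβ : β ≠ 0) (v : Fin 3 → ℝ) (hv : v 2 ≠ 0) :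
    inducedMetric β (fun _ b _ => ε / b ^ 2) (FF β) v 0 0 = GH β ε v 0 0 := by
  have hFF2 : (FF β v) 2 = v 2 := by simp [FF]
  simp only [inducedMetric, Matrix.of_apply, gApply]
  simp only [Fu0, Fu1, Fu2, siklos_eq, hFF2]
  simp [Fin.sum_univ_four, SK, FF, GH, Matrix.vecHead, Matrix.vecTail]
  try field_simp
  try ring
  try tauto

set_option maxHeartbeats 1000000 in
lemma indE01 {β : ℝ} (ε : ℝ) (hβ : β ≠ 0) (v : Fin 3 → ℝ) (hv : v 2 ≠ 0) :
    inducedMetric β (fun _ b _ => ε / b ^ 2) (FF β) v 0 1 = GH β ε v 0 1 := by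
  have hFF2 : (FF β v) 2 = v 2 := by simp [FF]
  simp only [inducedMetric, Matrix.of_apply, gApply]
  simp only [Fu0, Fu1, Fu2, siklos_eq, hFF2]
  simp [Fin.sum_univ_four, SK, FF, GH, Matrix.vecHead, Matrix.vecTail]
  try field_simp
  try ring
  try tauto

set_option maxHeartbeats 1000000 in
lemma indE02 {β : ℝ} (ε : ℝ) (hβ : β ≠ 0) (v : Fin 3 → ℝ) (hv : v 2 ≠ 0) :
    inducedMetric β (fun _ b _ => ε / b ^ 2) (FF β) v 0 2 = GH β ε v 0 2 := by
  have hFF2 : (FF β v) 2 = v 2 := by simp [FF]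
  simp only [inducedMetric, Matrix.of_apply, gApply]
  simp only [Fu0, Fu1, Fu2, siklos_eq, hFF2]
  simp [Fin.sum_univ_four, SK, FF, GH, Matrix.vecHead, Matrix.vecTail]
  try field_simp
  try ring
  try tauto

set_option maxHeartbeats 1000000 in
lemma indE10 {β : ℝ} (ε : ℝ) (hβ : β ≠ 0) (v : Fin 3 → ℝ) (hv : v 2 ≠ 0) :
    inducedMetric β (fun _ b _ => ε / b ^ 2) (FF β) v 1 0 = GH β ε v 1 0 := by
  have hFF2 : (FF β v) 2 = v 2 := by simp [FF]
  simp only [inducedMetric, Matrix.of_apply, gApply]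
  simp only [Fu0, Fu1, Fu2, siklos_eq, hFF2]
  simp [Fin.sum_univ_four, SK, FF, GH, Matrix.vecHead, Matrix.vecTail]
  try field_simp
  try ring
  try tauto

set_option maxHeartbeats 1000000 in
lemma indE11 {β : ℝ} (ε : ℝ) (hβ : β ≠ 0) (v : Fin 3 → ℝ) (hv : v 2 ≠ 0) :
    inducedMetric β (fun _ b _ => ε / b ^ 2) (FF β) v 1 1 = GH β ε v 1 1 := by
  have hFF2 : (FF β v) 2 = v 2 := by simp [FF]
  simp only [inducedMetric, Matrix.of_apply, gApply]
  simp only [Fu0, Fu1, Fu2, siklos_eq, hFF2]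
  simp [Fin.sum_univ_four, SK, FF, GH, Matrix.vecHead, Matrix.vecTail]
  try field_simp
  try ring
  try tauto

set_option maxHeartbeats 1000000 in
lemma indE12 {β : ℝ} (ε : ℝ) (hβ : β ≠ 0) (v : Fin 3 → ℝ) (hv : v 2 ≠ 0) :
    inducedMetric β (fun _ b _ => ε / b ^ 2) (FF β) v 1 2 = GH β ε v 1 2 := by
  have hFF2 : (FF β v) 2 = v 2 := by simp [FF]
  simp only [inducedMetric, Matrix.of_apply, gApply]
  simp only [Fu0, Fu1, Fu2, siklos_eq, hFF2]
  simp [Fin.sum_univ_four, SK, FF, GH, Matrix.vecHead, Matrix.vecTail]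
  try field_simp
  try ring
  try tauto

set_option maxHeartbeats 1000000 in
lemma indE20 {β : ℝ} (ε : ℝ) (hβ : β ≠ 0) (v : Fin 3 → ℝ) (hv : v 2 ≠ 0) :
    inducedMetric β (fun _ b _ => ε / b ^ 2) (FF β) v 2 0 = GH β ε v 2 0 := by
  have hFF2 : (FF β v) 2 = v 2 := by simp [FF]
  simp only [inducedMetric, Matrix.of_apply, gApply]
  simp only [Fu0, Fu1, Fu2, siklos_eq, hFF2]
  simp [Fin.sum_univ_four, SK, FF, GH, Matrix.vecHead, Matrix.vecTail]
  try field_simp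
  try ring
  try tauto

set_option maxHeartbeats 1000000 in
lemma indE21 {β : ℝ} (ε : ℝ) (hβ : β ≠ 0) (v : Fin 3 → ℝ) (hv : v 2 ≠ 0) :
    inducedMetric β (fun _ b _ => ε / b ^ 2) (FF β) v 2 1 = GH β ε v 2 1 := by
  have hFF2 : (FF β v) 2 = v 2 := by simp [FF]
  simp only [inducedMetric, Matrix.of_apply, gApply]
  simp only [Fu0, Fu1, Fu2, siklos_eq, hFF2]
  simp [Fin.sum_univ_four, SK, FF, GH, Matrix.vecHead, Matrix.vecTail]
  try field_simp
  try ring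
  try tauto

set_option maxHeartbeats 1000000 in
lemma indE22 {β : ℝ} (ε : ℝ) (hβ : β ≠ 0) (v : Fin 3 → ℝ) (hv : v 2 ≠ 0) :
    inducedMetric β (fun _ b _ => ε / b ^ 2) (FF β) v 2 2 = GH β ε v 2 2 := by
  have hFF2 : (FF β v) 2 = v 2 := by simp [FF]
  simp only [inducedMetric, Matrix.of_apply, gApply]
  simp only [Fu0, Fu1, Fu2, siklos_eq, hFF2]
  simp [Fin.sum_univ_four, SK, FF, GH, Matrix.vecHead, Matrix.vecTail]
  try field_simp
  try ring
  try tauto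

lemma inducedMetric_eq {β : ℝ} (ε : ℝ) (hβ : β ≠ 0) (v : Fin 3 → ℝ) (hv : v 2 ≠ 0) :
    inducedMetric β (fun _ b _ => ε / b ^ 2) (FF β) v = GH β ε v := by
  ext i j
  fin_cases i <;> fin_cases j
  exacts [indE00 ε hβ v hv, indE01 ε hβ v hv, indE02 ε hβ v hv,
    indE10 ε hβ v hv, indE11 ε hβ v hv, indE12 ε hβ v hv,
    indE20 ε hβ v hv, indE21 ε hβ v hv, indE22 ε hβ v hv]

noncomputable def GHI (β ε : ℝ) (u : Fin 3 → ℝ) : Matrix (Fin 3) (Fin 3) ℝ :=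
  Matrix.of ![![-(ε+β^2*(u 2)^2)/β^2, u 1*(u 2)/β, -(u 2)^2/β],
    ![u 1*(u 2)/β, 1, 0],
    ![-(u 2)^2/β, 0, 0]]

set_option maxHeartbeats 1000000 in
lemma GH_inv {β : ℝ} (ε : ℝ) (hβ : β ≠ 0) (u : Fin 3 → ℝ) (hu : u 2 ≠ 0) :
    (GH β ε u)⁻¹ = GHI β ε u := by
  apply Matrix.inv_eq_right_inv
  ext i j
  fin_cases i <;> fin_cases j <;>
  · simp [GH, GHI, Matrix.mul_apply, Fin.sum_univ_three, Matrix.vecHead, Matrix.vecTail]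
    try field_simp
    try ring

noncomputable def DGH (β ε : ℝ) (u : Fin 3 → ℝ) : Fin 3 → Fin 3 → Fin 3 → ℝ :=
  ![![![0,0,0],![0,0,0],![0,0,0]],
    ![![0,0,0],![0,0,1/(u 2)],![0,1/(u 2),(2*(u 1))/(u 2)^2]],
    ![![0,0,2*β/(u 2)^3],![0,0,-(u 1)/(u 2)^2],
      ![2*β/(u 2)^3, -(u 1)/(u 2)^2, -(4*ε)/(u 2)^5 - (2*((u 1)^2+β^2))/(u 2)^3]]]

set_option maxHeartbeats 1000000 in
lemma pd_gh (β ε : ℝ) (u : Fin 3 → ℝ) (hu : u 2 ≠ 0) (k i j : Fin 3) :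
    pd k (fun v => GH β ε v i j) u = DGH β ε u k i j := by
  fin_cases k <;> fin_cases i <;> fin_cases j <;>
  · simp [pd, GH, DGH, Function.update_self, Function.update_of_ne, Matrix.vecHead,
      Matrix.vecTail, deriv_div_const, deriv_id'', deriv_cmul]
    all_goals first
      | (rw [(hasDerivAt_cdp (-β) (u 2) 2 hu).deriv]; try norm_num)
      | (rw [deriv_cd1 (u 1) (u 2) hu]; try ring)
      | (erw [((hasDerivAt_cdp ε (u 2) 4 hu).add
            (hasDerivAt_cdp ((u 1)^2 + β^2) (u 2) 2 hu)).deriv]; try norm_num; try ring)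
      | (rw [((((hasDerivAt_pow 2 (u 1)).add_const (β^2)).div_const ((u 2)^2)).const_add
            (ε/(u 2)^4)).deriv]; try norm_num; try ring)

noncomputable def GAMH (β : ℝ) (u : Fin 3 → ℝ) : Fin 3 → Fin 3 → Fin 3 → ℝ :=
  ![![![0,0,0],![0,-(u 2)/β,-(u 1)/β],![0,-(u 1)/β, -((u 1)^2+β^2)/(β*(u 2))]],
    ![![0,0,0],![0,0,0],![0,0,0]],
    ![![0,0,0],![0,0,0],![0,0,-2/(u 2)]]]

set_option maxHeartbeats 2000000 in
lemma christoffel_hat {β : ℝ} (ε : ℝ) (hβ : β ≠ 0) (u : Fin 3 → ℝ) (hu : 0 < u 2)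
    (k i j : Fin 3) :
    christoffel (inducedMetric β (fun _ b _ => ε / b ^ 2) (FF β)) u k i j
      = GAMH β u k i j := by
  have hu' : u 2 ≠ 0 := ne_of_gt hu
  have hpd : ∀ a b c : Fin 3,
      pd a (fun y => inducedMetric β (fun _ b _ => ε / b ^ 2) (FF β) y b c) u
        = DGH β ε u a b c := by
    intro a b c
    have h1 := pd_congr_pos (f := fun y => inducedMetric β (fun _ b _ => ε / b ^ 2) (FF β) y b c)
      (g := fun y => GH β ε y b c) u hu
      (fun v hv => show inducedMetric β (fun _ b _ => ε / b ^ 2) (FF β) v b c = GH β ε v b c by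
        rw [inducedMetric_eq ε hβ v (ne_of_gt hv)]) a
    rw [h1]
    exact pd_gh β ε u hu' a b c
  unfold christoffel
  rw [inducedMetric_eq ε hβ u hu', GH_inv ε hβ u hu']
  simp only [hpd, Fin.sum_univ_three]
  fin_cases k <;> fin_cases i <;> fin_cases j <;>
  · simp [GHI, DGH, GAMH, Matrix.vecHead, Matrix.vecTail]
    try field_simp
    try ring

set_option maxHeartbeats 2000000 in
lemma nablah_eq {β : ℝ} (ε : ℝ) (hβ : β ≠ 0) (u : Fin 3 → ℝ) (hu : 0 < u 2)
    (k i j : Fin 3) :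
    nablah β (fun _ b _ => ε / b ^ 2) (FF β) (XI β) k i j u = 0 := by
  have hu' : u 2 ≠ 0 := ne_of_gt hu
  have hpd : ∀ a b c : Fin 3,
      pd a (fun v => sff β (fun _ b _ => ε / b ^ 2) (FF β) (XI β) b c v) u
        = DH β ε u a b c := by
    intro a b c
    have h1 := pd_congr_pos
      (f := fun v => sff β (fun _ b _ => ε / b ^ 2) (FF β) (XI β) b c v)
      (g := fun v => HFORM β ε v b c) u hu
      (fun v hv => sff_eq ε hβ v (ne_of_gt hv) b c) a
    rw [h1]
    exact pd_hform β ε u hu' a b c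
  unfold nablah
  simp only [hpd, christoffel_hat ε hβ u hu, sff_eq ε hβ u hu', Fin.sum_univ_three]
  fin_cases k <;> fin_cases i <;> fin_cases j <;>
  · simp [GAMH, DH, HFORM, Matrix.vecHead, Matrix.vecTail]
    try field_simp
    try ring

lemma nor0 {β : ℝ} (ε : ℝ) (hβ : β ≠ 0) (u : Fin 3 → ℝ) (hu : u 2 ≠ 0) :
    gApply (siklos β (fun _ b _ => ε / b ^ 2) (FF β u)) (XI β u) (Fu (FF β) 0 u) = 0 := by
  have hFF2 : (FF β u) 2 = u 2 := by simp [FF]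
  simp only [Fu0, siklos_eq, hFF2]
  simp [gApply, Fin.sum_univ_four, SK, FF, XI, Matrix.vecHead, Matrix.vecTail]

lemma nor1 {β : ℝ} (ε : ℝ) (hβ : β ≠ 0) (u : Fin 3 → ℝ) (hu : u 2 ≠ 0) :
    gApply (siklos β (fun _ b _ => ε / b ^ 2) (FF β u)) (XI β u) (Fu (FF β) 1 u) = 0 := by
  have hFF2 : (FF β u) 2 = u 2 := by simp [FF]
  simp only [Fu1, siklos_eq, hFF2]
  simp [gApply, Fin.sum_univ_four, SK, FF, XI, Matrix.vecHead, Matrix.vecTail]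

lemma nor2 {β : ℝ} (ε : ℝ) (hβ : β ≠ 0) (u : Fin 3 → ℝ) (hu : u 2 ≠ 0) :
    gApply (siklos β (fun _ b _ => ε / b ^ 2) (FF β u)) (XI β u) (Fu (FF β) 2 u) = 0 := by
  have hFF2 : (FF β u) 2 = u 2 := by simp [FF]
  simp only [Fu2, siklos_eq, hFF2]
  simp [gApply, Fin.sum_univ_four, SK, FF, XI, Matrix.vecHead, Matrix.vecTail]
  field_simp
  try ring

lemma unitn {β : ℝ} (ε : ℝ) (hβ : β ≠ 0) (u : Fin 3 → ℝ) (hu : u 2 ≠ 0) :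
    gApply (siklos β (fun _ b _ => ε / b ^ 2) (FF β u)) (XI β u) (XI β u) = 1 := by
  have hFF2 : (FF β u) 2 = u 2 := by simp [FF]
  simp only [siklos_eq, hFF2]
  simp [gApply, Fin.sum_univ_four, SK, FF, XI, Matrix.vecHead, Matrix.vecTail]
  field_simp
  try ring

theorem stmt_19 (β : ℝ) (hβ : 0 < β) (ε : ℝ) (hε : ε = -1 ∨ ε = 1)
    (H : ℝ → ℝ → ℝ → ℝ) (hH : H = fun _ b _ => ε / b ^ 2)
    (F ξ : (Fin 3 → ℝ) → Fin 4 → ℝ)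
    (hF : F = fun u => ![u 0, -u 2 / β, u 2, -u 1 * u 2 / β])
    (hξ : ξ = fun u => ![u 2, 0, u 2 / β, 0]) :
    (∀ u : Fin 3 → ℝ, 0 < u 2 →
      gApply (siklos β H (F u)) (ξ u) (ξ u) = 1 ∧
      ∀ i : Fin 3, gApply (siklos β H (F u)) (ξ u) (Fu F i u) = 0) ∧
    (∀ u : Fin 3 → ℝ, 0 < u 2 → ∀ k i j : Fin 3, nablah β H F ξ k i j u = 0) ∧
    ¬(∀ u : Fin 3 → ℝ, 0 < u 2 → ∀ i j : Fin 3, sff β H F ξ i j u = 0) := by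
  have hβ' : β ≠ 0 := ne_of_gt hβ
  have hF' : F = FF β := hF
  have hξ' : ξ = XI β := hξ
  subst hF' hξ' hH
  refine ⟨?_, ?_, ?_⟩
  · intro u hu
    refine ⟨unitn ε hβ' u (ne_of_gt hu), ?_⟩
    intro i
    fin_cases i
    exacts [nor0 ε hβ' u (ne_of_gt hu), nor1 ε hβ' u (ne_of_gt hu), nor2 ε hβ' u (ne_of_gt hu)]
  · intro u hu k i j
    exact nablah_eq ε hβ' u hu k i j
  · intro hall
    have h1 := hall ![0,0,1] (by simp) 1 1
    rw [sff_eq ε hβ' ![0,0,1] (by simp) 1 1] at h1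
    simp [HFORM] at h1
    exact hβ' h1
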